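/- Let G be a ribbon graph, v a vertex, and e_1, e_2 two edges incident to v. Then there exists γ_0 ∈ Pic^0(G) such that for every spanning tree T, the class of β_{(v,e_2)}(T) equals γ_0 plus the class of β_{(v,e_1)}(T) in Pic^g(G). In particular β_{(v,e_1)}(T) - β_{(v,e_2)}(T) is, up to linear equivalence, independent of the spanning tree T. -/

import Mathlib

/-- A finite multigraph: vertices, edges, and an (arbitrarily oriented)
pair of endpoints for each edge. -/
structure Multigraph where
  V : Type
  E : Type
  [fV : Fintype V]
  [fE : Fintype E]
  [dV : DecidableEq V]
  [dE : DecidableEq E]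
  ends : E → V × V

attribute [instance] Multigraph.fV Multigraph.fE Multigraph.dV Multigraph.dE

namespace Multigraph

variable (G : Multigraph)

/-- No loop edges. -/
def Loopless : Prop := ∀ e : G.E, (G.ends e).1 ≠ (G.ends e).2

/-- Adjacency via some edge. -/
def Adj (x y : G.V) : Prop := ∃ e : G.E, G.ends e = (x, y) ∨ G.ends e = (y, x)

/-- The multigraph is connected. -/
def Connected : Prop := Nonempty G.V ∧ ∀ x y : G.V, Relation.ReflTransGen G.Adj x y

/-- The degree of a divisor (a divisor is a function `V → ℤ`). -/
def deg (D : G.V → ℤ) : ℤ := ∑ v, D v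

/-- The Laplacian divisor `Δ f` of `f : V → ℤ`. -/
def lap (f : G.V → ℤ) : G.V → ℤ := fun v =>
  ∑ e : G.E, ((if (G.ends e).1 = v then f v - f (G.ends e).2 else 0) +
              (if (G.ends e).2 = v then f v - f (G.ends e).1 else 0))

/-- Linear equivalence of divisors. -/
def LinEquiv (D D' : G.V → ℤ) : Prop := ∃ f : G.V → ℤ, D - D' = G.lap f

/-- `x` and `y` are connected using only edges from `S`. -/
def ConnectsVia (S : Finset G.E) (x y : G.V) : Prop :=
  Relation.ReflTransGen
    (fun a b => ∃ e ∈ S, G.ends e = (a, b) ∨ G.ends e = (b, a)) x y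

/-- A spanning tree, as an edge set: it connects all vertices and has
`#V - 1` edges. -/
def IsSpanningTree (T : Finset G.E) : Prop :=
  (∀ x y : G.V, G.ConnectsVia T x y) ∧ T.card + 1 = Fintype.card G.V

/-- `D` is a `T`-break divisor: one chip on an endpoint of each edge outside `T`. -/
def IsTBreak (T : Finset G.E) (D : G.V → ℤ) : Prop :=
  ∃ ch : G.E → G.V,
    (∀ e ∉ T, ch e = (G.ends e).1 ∨ ch e = (G.ends e).2) ∧
    ∀ v, D v = ((Finset.univ.filter (fun e => e ∉ T ∧ ch e = v)).card : ℤ)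

/-- `D` is a break divisor. -/
def IsBreak (D : G.V → ℤ) : Prop := ∃ T, G.IsSpanningTree T ∧ G.IsTBreak T D

/-- The genus `#E - #V + 1`. -/
def genus : ℤ := (Fintype.card G.E : ℤ) - Fintype.card G.V + 1

end Multigraph

namespace Multigraph

variable (G : Multigraph)

/-- A dart (half-edge / directed edge): an edge with a direction. -/
abbrev Dart := G.E × Bool

/-- The tail (initial vertex) of a dart. -/
def dtail (d : G.Dart) : G.V := if d.2 then (G.ends d.1).1 else (G.ends d.1).2

/-- The head (terminal vertex) of a dart. -/
def dhead (d : G.Dart) : G.V := if d.2 then (G.ends d.1).2 else (G.ends d.1).1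

/-- Reversing a dart. -/
def flipPerm : Equiv.Perm G.Dart :=
  Function.Involutive.toPerm (fun d => (d.1, !d.2)) (by intro d; simp)

end Multigraph

/-- A ribbon graph: a multigraph together with a cyclic ordering of the darts
around each vertex, encoded as a permutation `next` of the darts whose cycles
are exactly the fibers of the tail map. -/
structure RibbonGraph extends Multigraph where
  next : Equiv.Perm (E × Bool)
  cyclic : ∀ d d' : E × Bool,
    toMultigraph.dtail d = toMultigraph.dtail d' ↔ next.SameCycle d d'

namespace RibbonGraph

variable (R : RibbonGraph)

/-- One step of the Bernardi tour with respect to a spanning tree `T`: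
walk along tree edges, cut through non-tree edges. -/
def bernardiStep (T : Finset R.toMultigraph.E) (d : R.toMultigraph.Dart) :
    R.toMultigraph.Dart :=
  if d.1 ∈ T then R.next (R.toMultigraph.flipPerm d) else R.next d

/-- The Bernardi tour: the sequence of darts considered by the Bernardi
process started at the dart `d0`. -/
def bernardiTour (T : Finset R.toMultigraph.E) (d0 : R.toMultigraph.Dart)
    (n : ℕ) : R.toMultigraph.Dart :=
  (R.bernardiStep T)^[n] d0

open scoped Classical in
/-- The Bernardi divisor `β_{(v,e)}(T)`: a chip is dropped at the current
vertex each time the tour first cuts through an edge not in `T`. -/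
noncomputable def bernardiDiv (T : Finset R.toMultigraph.E)
    (d0 : R.toMultigraph.Dart) : R.toMultigraph.V → ℤ := fun v =>
  ((Finset.univ.filter (fun e : R.toMultigraph.E => e ∉ T ∧
      ∃ i : ℕ, (R.bernardiTour T d0 i).1 = e ∧
        R.toMultigraph.dtail (R.bernardiTour T d0 i) = v ∧
        ∀ j < i, (R.bernardiTour T d0 j).1 ≠ e)).card : ℤ)

/-- The face permutation of a ribbon graph. -/
def facePerm : Equiv.Perm (R.toMultigraph.Dart) := R.next * R.toMultigraph.flipPerm

/-- Darts belonging to the same face. -/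
def faceSetoid : Setoid (R.toMultigraph.Dart) :=
  ⟨R.facePerm.SameCycle,
    ⟨fun _ => Equiv.Perm.SameCycle.refl _ _, fun h => h.symm, fun h h' => h.trans h'⟩⟩

/-- The number of faces of a ribbon graph. -/
noncomputable def numFaces : ℕ := Nat.card (Quotient R.faceSetoid)

/-- A ribbon graph is planar iff Euler's formula `#V - #E + #F = 2` holds,
i.e. its topological genus is zero. -/
def Planar : Prop :=
  (Fintype.card R.toMultigraph.V : ℤ) - Fintype.card R.toMultigraph.E + R.numFaces = 2

end RibbonGraph

/-! ### Auxiliary development for the Bernardi theorem -/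

section BWPerm

variable {α : Type*} [Fintype α] [DecidableEq α]

lemma bw_reach_aux (π : Equiv.Perm α) (a b : α) (hab : ¬π.SameCycle a b) :
    ∀ (n : ℕ) (z : α), π.SameCycle z b → (π ^ n) z = b →
      (π * Equiv.swap a b).SameCycle z b := by
  intro n
  induction n with
  | zero =>
    intro z _ h
    rw [pow_zero, Equiv.Perm.one_apply] at h
    subst h; exact Equiv.Perm.SameCycle.refl _ _
  | succ n ih =>
    intro z hzb hpow
    rcases eq_or_ne z b with rfl | hz
    · exact Equiv.Perm.SameCycle.refl _ _
    have hza : z ≠ a := by rintro rfl; exact hab hzb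
    have h1 : (π * Equiv.swap a b) z = π z := by
      rw [Equiv.Perm.mul_apply, Equiv.swap_apply_of_ne_of_ne hza hz]
    have h2 : (π ^ n) (π z) = b := by
      rw [← Equiv.Perm.mul_apply, ← pow_succ]; exact hpow
    have hzb' : π.SameCycle (π z) b := (Equiv.Perm.sameCycle_apply_left).2 hzb
    have h4 : (π * Equiv.swap a b).SameCycle z (π z) := ⟨1, by rw [zpow_one]; exact h1⟩
    exact h4.trans (ih (π z) hzb' h2)

lemma bw_merge_self (π : Equiv.Perm α) (a b : α) (hab : ¬π.SameCycle a b) :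
    (π * Equiv.swap a b).SameCycle a b := by
  have h1 : π.SameCycle (π b) b := (Equiv.Perm.sameCycle_apply_left).2 (Equiv.Perm.SameCycle.refl _ _)
  obtain ⟨n, _, hn⟩ := h1.exists_pow_eq'
  have h2 := bw_reach_aux π a b hab n (π b) h1 hn
  have h0 : (π * Equiv.swap a b) a = π b := by
    rw [Equiv.Perm.mul_apply, Equiv.swap_apply_left]
  have h3 : (π * Equiv.swap a b).SameCycle a (π b) := ⟨1, by rw [zpow_one]; exact h0⟩
  exact h3.trans h2

lemma bw_merge_of_sameCycle (π : Equiv.Perm α) (a b : α) (hab : ¬π.SameCycle a b)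
    {x y : α} (h : π.SameCycle x y) : (π * Equiv.swap a b).SameCycle x y := by
  classical
  have maina : ∀ z : α, π.SameCycle z a → (π * Equiv.swap a b).SameCycle z a := by
    intro z hz
    obtain ⟨n, _, hn⟩ := hz.exists_pow_eq'
    have := bw_reach_aux π b a (fun hc => hab hc.symm) n z hz hn
    rwa [Equiv.swap_comm] at this
  have mainb : ∀ z : α, π.SameCycle z b → (π * Equiv.swap a b).SameCycle z b := by
    intro z hz
    obtain ⟨n, _, hn⟩ := hz.exists_pow_eq'
    exact bw_reach_aux π a b hab n z hz hn
  by_cases hxa : π.SameCycle x a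
  · exact (maina x hxa).trans (maina y (h.symm.trans hxa)).symm
  by_cases hxb : π.SameCycle x b
  · exact (mainb x hxb).trans (mainb y (h.symm.trans hxb)).symm
  · obtain ⟨n, _, hn⟩ := h.exists_pow_eq'
    have heq : ∀ m : ℕ, ((π * Equiv.swap a b) ^ m) x = (π ^ m) x := by
      intro m; induction m with
      | zero => simp
      | succ m ih =>
        have hua : (π ^ m) x ≠ a := fun hc => hxa ⟨(m : ℤ), by rw [zpow_natCast]; exact hc⟩
        have hub : (π ^ m) x ≠ b := fun hc => hxb ⟨(m : ℤ), by rw [zpow_natCast]; exact hc⟩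
        rw [pow_succ', Equiv.Perm.mul_apply, ih, pow_succ', Equiv.Perm.mul_apply,
          Equiv.Perm.mul_apply, Equiv.swap_apply_of_ne_of_ne hua hub]
    exact ⟨(n : ℤ), by rw [zpow_natCast, heq n]; exact hn⟩

end BWPerm

namespace Multigraph

variable (G : Multigraph)

lemma connectsVia_symm {F : Finset G.E} {x y : G.V} (h : G.ConnectsVia F x y) :
    G.ConnectsVia F y x := by
  refine @Std.Symm.symm _ _ (@Relation.ReflTransGen.symmetric _ (fun a b : G.V => ∃ e ∈ F, G.ends e = (a, b) ∨ G.ends e = (b, a)) ⟨?_⟩) x y h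
  rintro a b ⟨e, he, h' | h'⟩
  exacts [⟨e, he, Or.inr h'⟩, ⟨e, he, Or.inl h'⟩]

lemma connectsVia_mono {F F' : Finset G.E} (hFF : F ⊆ F') {x y : G.V}
    (h : G.ConnectsVia F x y) : G.ConnectsVia F' x y :=
  Relation.ReflTransGen.mono (fun a b (⟨e, he, hh⟩ : ∃ e ∈ F, G.ends e = (a, b) ∨ G.ends e = (b, a)) => (⟨e, hFF he, hh⟩ : ∃ e ∈ F', G.ends e = (a, b) ∨ G.ends e = (b, a))) x y h

lemma connectsVia_empty {x y : G.V} (h : G.ConnectsVia ∅ x y) : x = y := by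
  induction h with
  | refl => rfl
  | tail _ hstep _ => obtain ⟨e, he, _⟩ := hstep; exact absurd he (Finset.notMem_empty e)

def compSetoid (F : Finset G.E) : Setoid G.V :=
  ⟨G.ConnectsVia F, ⟨fun _ => Relation.ReflTransGen.refl,
    fun h => G.connectsVia_symm h, fun h h' => Relation.ReflTransGen.trans h h'⟩⟩

noncomputable def ncomp (F : Finset G.E) : ℕ := Nat.card (Quotient (G.compSetoid F))

lemma ncomp_empty : G.ncomp ∅ = Fintype.card G.V := by
  rw [ncomp, ← Nat.card_eq_fintype_card]
  refine (Nat.card_eq_of_bijective (Quotient.mk (G.compSetoid ∅)) ⟨?_, ?_⟩).symm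
  · intro a b h
    exact G.connectsVia_empty (Quotient.exact h)
  · intro c
    exact ⟨c.out, Quotient.out_eq c⟩

lemma connectsVia_insert_elim {F : Finset G.E} {t : G.E} {u w : G.V}
    (h : G.ConnectsVia (insert t F) u w) :
    G.ConnectsVia F u w ∨
      ((G.ConnectsVia F u (G.ends t).1 ∨ G.ConnectsVia F u (G.ends t).2) ∧
       (G.ConnectsVia F w (G.ends t).1 ∨ G.ConnectsVia F w (G.ends t).2)) := by
  induction h with
  | refl => exact Or.inl Relation.ReflTransGen.refl
  | @tail b c hub hbc ih =>
    obtain ⟨e, he, hends⟩ := hbc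
    rcases Finset.mem_insert.1 he with rfl | heF
    · -- e = t
      have hc : G.ConnectsVia F c (G.ends e).1 ∨ G.ConnectsVia F c (G.ends e).2 := by
        rcases hends with h1 | h1
        · right; rw [h1]; exact Relation.ReflTransGen.refl
        · left; rw [h1]; exact Relation.ReflTransGen.refl
      have hb : G.ConnectsVia F b (G.ends e).1 ∨ G.ConnectsVia F b (G.ends e).2 := by
        rcases hends with h1 | h1
        · left; rw [h1]; exact Relation.ReflTransGen.refl
        · right; rw [h1]; exact Relation.ReflTransGen.refl
      right
      refine ⟨?_, hc⟩
      rcases ih with hF | ⟨hu, _⟩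
      · rcases hb with h1 | h1
        · exact Or.inl (hF.trans h1)
        · exact Or.inr (hF.trans h1)
      · exact hu
    · -- e ∈ F
      have hstep : G.ConnectsVia F b c := Relation.ReflTransGen.single ⟨e, heF, hends⟩
      rcases ih with hF | ⟨hu, hb⟩
      · exact Or.inl (hF.trans hstep)
      · refine Or.inr ⟨hu, ?_⟩
        rcases hb with h1 | h1
        · exact Or.inl ((G.connectsVia_symm hstep).trans h1)
        · exact Or.inr ((G.connectsVia_symm hstep).trans h1)

lemma ncomp_le_insert (F : Finset G.E) (t : G.E) :
    G.ncomp F ≤ G.ncomp (insert t F) + 1 := by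
  classical
  set s := G.compSetoid F with hs
  set s' := G.compSetoid (insert t F) with hs'
  let mp : Quotient s → Quotient s' :=
    Quotient.map id (fun a b hab => G.connectsVia_mono (Finset.subset_insert t F) hab)
  have claim : ∀ c c' : Quotient s, mp c = mp c' →
      c = c' ∨ ((c = Quotient.mk s (G.ends t).1 ∨ c = Quotient.mk s (G.ends t).2) ∧
               (c' = Quotient.mk s (G.ends t).1 ∨ c' = Quotient.mk s (G.ends t).2)) := by
    intro c c'
    refine Quotient.inductionOn₂ c c' ?_
    intro a b h
    have hab : G.ConnectsVia (insert t F) a b := by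
      have : Quotient.mk s' a = Quotient.mk s' b := by
        exact h
      exact Quotient.exact this
    rcases G.connectsVia_insert_elim hab with hF | ⟨hu, hw⟩
    · exact Or.inl (Quotient.sound hF)
    · refine Or.inr ⟨?_, ?_⟩
      · rcases hu with h1 | h1
        exacts [Or.inl (Quotient.sound h1), Or.inr (Quotient.sound h1)]
      · rcases hw with h1 | h1
        exacts [Or.inl (Quotient.sound h1), Or.inr (Quotient.sound h1)]
  let x := (G.ends t).1
  let y := (G.ends t).2
  let ψ : Quotient s → Quotient s' ⊕ Unit := fun c =>
    if c = Quotient.mk s y ∧ Quotient.mk s x ≠ Quotient.mk s y then Sum.inr () else Sum.inl (mp c)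
  have hinj : Function.Injective ψ := by
    intro c c' h
    have hψ : ∀ cc, ψ cc = if cc = Quotient.mk s y ∧ Quotient.mk s x ≠ Quotient.mk s y
        then Sum.inr () else Sum.inl (mp cc) := fun _ => rfl
    rw [hψ, hψ] at h
    by_cases h1 : c = Quotient.mk s y ∧ Quotient.mk s x ≠ Quotient.mk s y
    case pos =>
      by_cases h2 : c' = Quotient.mk s y ∧ Quotient.mk s x ≠ Quotient.mk s y
      · exact h1.1.trans h2.1.symm
      · rw [if_pos h1, if_neg h2] at h; cases h
    case neg =>
      by_cases h2 : c' = Quotient.mk s y ∧ Quotient.mk s x ≠ Quotient.mk s y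
      · rw [if_neg h1, if_pos h2] at h; cases h
      rw [if_neg h1, if_neg h2] at h
      have hmp : mp c = mp c' := Sum.inl.inj h
      rcases claim c c' hmp with rfl | ⟨hc, hc'⟩
      · rfl
      · by_cases hxy : Quotient.mk s x = Quotient.mk s y
        · have e1 : c = Quotient.mk s x := by
            rcases hc with rfl | rfl; exacts [rfl, hxy.symm]
          have e2 : c' = Quotient.mk s x := by
            rcases hc' with rfl | rfl; exacts [rfl, hxy.symm]
          exact e1.trans e2.symm
        · have e1 : c = Quotient.mk s x := by
            rcases hc with rfl | rfl
            · rfl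
            · exact absurd ⟨rfl, hxy⟩ h1
          have e2 : c' = Quotient.mk s x := by
            rcases hc' with rfl | rfl
            · rfl
            · exact absurd ⟨rfl, hxy⟩ h2
          exact e1.trans e2.symm
  have hcard := Nat.card_le_card_of_injective ψ hinj
  have : Nat.card (Quotient s' ⊕ Unit) = Nat.card (Quotient s') + 1 := by
    rw [Nat.card_sum]; simp
  rw [this] at hcard
  exact hcard

lemma card_le_of_connects {F : Finset G.E} (hne : Nonempty G.V)
    (h : ∀ x y : G.V, G.ConnectsVia F x y) : Fintype.card G.V ≤ F.card + 1 := by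
  have step : ∀ F' : Finset G.E, Fintype.card G.V ≤ G.ncomp F' + F'.card := by
    intro F'
    induction F' using Finset.induction_on with
    | empty => simp [G.ncomp_empty]
    | @insert t F' htF ih =>
      have h1 := G.ncomp_le_insert F' t
      rw [Finset.card_insert_of_notMem htF]
      omega
  have h1 : G.ncomp F = 1 := by
    have hsub : Subsingleton (Quotient (G.compSetoid F)) :=
      ⟨fun c c' => Quotient.inductionOn₂ c c' (fun a b => Quotient.sound (h a b))⟩
    have hnon : Nonempty (Quotient (G.compSetoid F)) := Nonempty.map (Quotient.mk _) hne
    rw [ncomp, Nat.card_eq_one_iff_unique]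
    exact ⟨hsub, hnon⟩
  have h2 := step F
  omega

lemma bridge (hG : G.Connected) {T : Finset G.E} (hT : G.IsSpanningTree T) {t : G.E}
    (ht : t ∈ T) : ¬ G.ConnectsVia (T.erase t) (G.ends t).1 (G.ends t).2 := by
  intro hcon
  have hall : ∀ x y : G.V, G.ConnectsVia (T.erase t) x y := by
    intro x y
    have hxy := hT.1 x y
    induction hxy with
    | refl => exact Relation.ReflTransGen.refl
    | @tail b c hub hbc ih =>
      refine ih.trans ?_
      obtain ⟨e, he, hends⟩ := hbc
      by_cases het : e = t
      · subst het
        rcases hends with h1 | h1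
        · have := hcon; rw [h1] at this; exact this
        · have := G.connectsVia_symm hcon; rw [h1] at this; exact this
      · exact Relation.ReflTransGen.single ⟨e, Finset.mem_erase.2 ⟨het, he⟩, hends⟩
  have hcard := G.card_le_of_connects hG.1 hall
  have he := Finset.card_erase_of_mem ht
  have hpos : 1 ≤ T.card := Finset.card_pos.2 ⟨t, ht⟩
  have hT2 := hT.2
  omega

lemma lap_add (f g : G.V → ℤ) : G.lap (f + g) = G.lap f + G.lap g := by
  funext v
  simp only [lap, Pi.add_apply, ← Finset.sum_add_distrib]
  refine Finset.sum_congr rfl fun e _ => ?_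
  split_ifs <;> ring

lemma lap_zero : G.lap 0 = 0 := by
  funext v
  simp [lap]

lemma lap_neg (f : G.V → ℤ) : G.lap (-f) = - G.lap f := by
  funext v
  simp only [lap, Pi.neg_apply, ← Finset.sum_neg_distrib]
  refine Finset.sum_congr rfl fun e _ => ?_
  split_ifs <;> ring

end Multigraph
section BWOrbit

open scoped Classical

variable {α : Type*} [Fintype α] [DecidableEq α]

variable (σ : Equiv.Perm α) (d : α)

lemma bw_exists_per : ∃ n : ℕ, 0 < n ∧ (σ ^ n) d = d :=
  ⟨orderOf σ, orderOf_pos σ, by rw [pow_orderOf_eq_one]; rfl⟩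

noncomputable def bwPer : ℕ := Nat.find (bw_exists_per σ d)

lemma bwPer_pos : 0 < bwPer σ d := (Nat.find_spec (bw_exists_per σ d)).1

lemma bwPer_spec : (σ ^ bwPer σ d) d = d := (Nat.find_spec (bw_exists_per σ d)).2

lemma bwPer_min {k : ℕ} (h0 : 0 < k) (hk : (σ ^ k) d = d) : bwPer σ d ≤ k :=
  Nat.find_min' _ ⟨h0, hk⟩

lemma bw_pow_add (a b : ℕ) (z : α) : (σ ^ (a + b)) z = (σ ^ a) ((σ ^ b) z) := by
  rw [pow_add, Equiv.Perm.mul_apply]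

variable (hreach : ∀ z : α, ∃ n : ℕ, (σ ^ n) d = z)

noncomputable def bwPos (z : α) : ℕ := Nat.find (hreach z)

lemma bwPos_spec (z : α) : (σ ^ bwPos σ d hreach z) d = z := Nat.find_spec (hreach z)

lemma bwPos_min {z : α} {k : ℕ} (h : (σ ^ k) d = z) : bwPos σ d hreach z ≤ k :=
  Nat.find_min' _ h

lemma bwPos_lt (z : α) : bwPos σ d hreach z < bwPer σ d := by
  by_contra hge
  push_neg at hge
  have hp := bwPer_pos σ d
  have h1 : (σ ^ (bwPos σ d hreach z - bwPer σ d + bwPer σ d)) d = z := by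
    rw [Nat.sub_add_cancel hge]; exact bwPos_spec σ d hreach z
  rw [bw_pow_add, bwPer_spec] at h1
  have hle := bwPos_min σ d hreach h1
  omega

lemma bwPos_unique {z : α} {k : ℕ} (hk : k < bwPer σ d) (h : (σ ^ k) d = z) :
    bwPos σ d hreach z = k := by
  have hspec := bwPos_spec σ d hreach z
  have hle : bwPos σ d hreach z ≤ k := bwPos_min σ d hreach h
  rcases eq_or_lt_of_le hle with heq | hlt
  · exact heq
  · exfalso
    have h1 : (σ ^ (bwPer σ d - k + k)) d = d := by
      rw [Nat.sub_add_cancel hk.le]; exact bwPer_spec σ d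
    have h2 : (σ ^ (bwPer σ d - k + bwPos σ d hreach z)) d = d := by
      rw [bw_pow_add, hspec, ← h, ← bw_pow_add]; exact h1
    have h3 := bwPer_min σ d (k := bwPer σ d - k + bwPos σ d hreach z) (by omega) h2
    omega

lemma bwPos_self : bwPos σ d hreach d = 0 :=
  bwPos_unique σ d hreach (bwPer_pos σ d) (by rw [pow_zero]; rfl)

lemma bwPer_shift (c : ℕ) : bwPer σ ((σ ^ c) d) = bwPer σ d := by
  have key : ∀ n : ℕ, ((σ ^ n) ((σ ^ c) d) = (σ ^ c) d) ↔ ((σ ^ n) d = d) := by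
    intro n
    rw [← bw_pow_add, Nat.add_comm, bw_pow_add]
    exact ⟨fun h => (σ ^ c).injective h, fun h => by rw [h]⟩
  apply le_antisymm
  · exact bwPer_min σ ((σ ^ c) d) (bwPer_pos σ d) ((key _).2 (bwPer_spec σ d))
  · exact bwPer_min σ d (bwPer_pos σ ((σ ^ c) d)) ((key _).1 (bwPer_spec σ ((σ ^ c) d)))

include hreach in
lemma bw_reach_shift (c : ℕ) : ∀ z : α, ∃ n : ℕ, (σ ^ n) ((σ ^ c) d) = z := by
  intro z
  obtain ⟨k, hk⟩ := hreach z
  refine ⟨k + bwPer σ d * c - c, ?_⟩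
  rw [← bw_pow_add]
  have hc : c ≤ k + bwPer σ d * c := by
    have := bwPer_pos σ d
    calc c ≤ bwPer σ d * c := Nat.le_mul_of_pos_left c this
    _ ≤ k + bwPer σ d * c := Nat.le_add_left _ _
  rw [Nat.sub_add_cancel hc]
  have hper : ∀ m : ℕ, (σ ^ (bwPer σ d * m)) d = d := by
    intro m; induction m with
    | zero => rw [Nat.mul_zero, pow_zero]; rfl
    | succ m ih => rw [Nat.mul_succ, bw_pow_add, bwPer_spec, ih]
  rw [bw_pow_add, hper c]; exact hk

lemma bwPos_shift_le {m : ℕ} (hm : m + 1 ≤ bwPer σ d) {z : α}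
    (hz : bwPos σ d hreach z ≤ m) :
    bwPos σ ((σ ^ (m + 1)) d) (bw_reach_shift σ d hreach (m + 1)) z
      = bwPos σ d hreach z + (bwPer σ d - (m + 1)) := by
  apply bwPos_unique
  · rw [bwPer_shift]
    have := bwPos_lt σ d hreach z
    omega
  · rw [← bw_pow_add]
    have he : bwPos σ d hreach z + (bwPer σ d - (m + 1)) + (m + 1)
        = bwPos σ d hreach z + bwPer σ d := by omega
    rw [he, bw_pow_add, bwPer_spec]
    exact bwPos_spec σ d hreach z

lemma bwPos_shift_gt {m : ℕ} (hm : m + 1 ≤ bwPer σ d) {z : α}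
    (hz : m < bwPos σ d hreach z) :
    bwPos σ ((σ ^ (m + 1)) d) (bw_reach_shift σ d hreach (m + 1)) z
      = bwPos σ d hreach z - (m + 1) := by
  apply bwPos_unique
  · rw [bwPer_shift]
    have := bwPos_lt σ d hreach z
    omega
  · rw [← bw_pow_add, Nat.sub_add_cancel (by omega)]
    exact bwPos_spec σ d hreach z

variable {β : Type*} (L : α → β)

lemma bw_fo (e : β) {z z' : α} (hL : ∀ w : α, L w = e ↔ w = z ∨ w = z')
    (hlt : bwPos σ d hreach z < bwPos σ d hreach z')
    (inst : DecidablePred fun n : ℕ => L ((σ ^ n) d) = e)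
    (hE : ∃ n : ℕ, L ((σ ^ n) d) = e) :
    (σ ^ @Nat.find _ inst hE) d = z := by
  have hzocc : L ((σ ^ bwPos σ d hreach z) d) = e := by
    rw [bwPos_spec]; exact (hL z).2 (Or.inl rfl)
  have hNle : @Nat.find _ inst hE ≤ bwPos σ d hreach z := @Nat.find_min' _ inst hE _ hzocc
  have hprop : L ((σ ^ @Nat.find _ inst hE) d) = e := @Nat.find_spec _ inst hE
  rcases (hL _).1 hprop with h | h
  · exact h
  · exfalso
    have hNlt : @Nat.find _ inst hE < bwPer σ d := lt_of_le_of_lt hNle (bwPos_lt σ d hreach z)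
    have := bwPos_unique σ d hreach hNlt h
    omega

end BWOrbit
namespace RibbonGraph

open Finset

variable (R : RibbonGraph)

/-- The involution flipping the darts of edges in `F`. -/
def bwPhi (F : Finset R.toMultigraph.E) : Equiv.Perm R.toMultigraph.Dart :=
  Function.Involutive.toPerm (fun d => if d.1 ∈ F then (d.1, !d.2) else d)
    (by intro d; by_cases h : d.1 ∈ F <;> simp [h])

/-- The Bernardi step permutation associated to an edge set `F`. -/
def bwSigma (F : Finset R.toMultigraph.E) : Equiv.Perm R.toMultigraph.Dart :=
  (R.bwPhi F).trans R.next

lemma bwSigma_apply (F : Finset R.toMultigraph.E) (d : R.toMultigraph.Dart) :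
    R.bwSigma F d = R.next (if d.1 ∈ F then (d.1, !d.2) else d) := by
  simp [bwSigma, bwPhi, Equiv.trans_apply, Function.Involutive.coe_toPerm]; rfl

lemma bernardiStep_eq (T : Finset R.toMultigraph.E) :
    R.bernardiStep T = ⇑(R.bwSigma T) := by
  funext d
  rw [bernardiStep, bwSigma_apply]
  by_cases h : d.1 ∈ T <;>
    simp [h, Multigraph.flipPerm, Function.Involutive.coe_toPerm] <;> rfl

lemma dtail_next (d : R.toMultigraph.Dart) :
    R.toMultigraph.dtail (R.next d) = R.toMultigraph.dtail d :=
  ((R.cyclic d (R.next d)).2 ⟨1, by rw [zpow_one]⟩).symm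

lemma dtail_flip (d : R.toMultigraph.Dart) :
    R.toMultigraph.dtail (d.1, !d.2) = R.toMultigraph.dhead d := by
  rcases d with ⟨e, b⟩; cases b <;> simp [Multigraph.dtail, Multigraph.dhead]

lemma dhead_flip (d : R.toMultigraph.Dart) :
    R.toMultigraph.dhead (d.1, !d.2) = R.toMultigraph.dtail d := by
  rcases d with ⟨e, b⟩; cases b <;> simp [Multigraph.dtail, Multigraph.dhead]

lemma dtail_bwSigma (F : Finset R.toMultigraph.E) (d : R.toMultigraph.Dart) :
    R.toMultigraph.dtail (R.bwSigma F d) =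
      if d.1 ∈ F then R.toMultigraph.dhead d else R.toMultigraph.dtail d := by
  rw [bwSigma_apply, dtail_next]
  split_ifs with h
  · exact R.dtail_flip d
  · rfl

lemma dart_step {F : Finset R.toMultigraph.E} {d : R.toMultigraph.Dart} (hd : d.1 ∈ F) :
    R.toMultigraph.ConnectsVia F (R.toMultigraph.dtail d) (R.toMultigraph.dhead d) := by
  refine Relation.ReflTransGen.single ⟨d.1, hd, ?_⟩
  rcases d with ⟨e, b⟩
  cases b
  · right; simp [Multigraph.dtail, Multigraph.dhead]
  · left; simp [Multigraph.dtail, Multigraph.dhead]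

lemma connects_of_pow_bwSigma (F : Finset R.toMultigraph.E) :
    ∀ (n : ℕ) (d : R.toMultigraph.Dart),
      R.toMultigraph.ConnectsVia F (R.toMultigraph.dtail d)
        (R.toMultigraph.dtail (((R.bwSigma F) ^ n) d)) := by
  intro n
  induction n with
  | zero => intro d; rw [pow_zero]; exact Relation.ReflTransGen.refl
  | succ n ih =>
    intro d
    have h1 : ((R.bwSigma F) ^ (n + 1)) d = ((R.bwSigma F) ^ n) (R.bwSigma F d) := by
      rw [bw_pow_add (R.bwSigma F) n 1, pow_one]
    rw [h1]
    refine Relation.ReflTransGen.trans ?_ (ih (R.bwSigma F d))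
    rw [dtail_bwSigma]
    split_ifs with h
    · exact R.dart_step h
    · exact Relation.ReflTransGen.refl

lemma sameCycle_connects {F : Finset R.toMultigraph.E} {d d' : R.toMultigraph.Dart}
    (h : (R.bwSigma F).SameCycle d d') :
    R.toMultigraph.ConnectsVia F (R.toMultigraph.dtail d) (R.toMultigraph.dtail d') := by
  obtain ⟨n, _, hn⟩ := h.exists_pow_eq'
  rw [← hn]
  exact R.connects_of_pow_bwSigma F n d

lemma connects_sameCycle (hG : R.toMultigraph.Connected)
    {T : Finset R.toMultigraph.E} (hT : R.toMultigraph.IsSpanningTree T) :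
    ∀ F : Finset R.toMultigraph.E, F ⊆ T → ∀ d d' : R.toMultigraph.Dart,
      R.toMultigraph.ConnectsVia F (R.toMultigraph.dtail d) (R.toMultigraph.dtail d') →
      (R.bwSigma F).SameCycle d d' := by
  intro F
  induction F using Finset.induction_on with
  | empty =>
    intro _ d d' h
    have he : R.bwSigma ∅ = R.next := by
      apply Equiv.ext; intro z; rw [bwSigma_apply]; simp
    rw [he]
    exact (R.cyclic d d').1 (Multigraph.connectsVia_empty _ h)
  | @insert t F htF ih =>
    intro hsub d d' h
    have htT : t ∈ T := hsub (Finset.mem_insert_self t F)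
    have hFT : F ⊆ T := fun x hx => hsub (Finset.mem_insert_of_mem hx)
    set a : R.toMultigraph.Dart := (t, true) with ha
    set b : R.toMultigraph.Dart := (t, false) with hb
    have hbridge := R.toMultigraph.bridge hG hT htT
    have hnc : ¬ (R.bwSigma F).SameCycle a b := by
      intro hc
      have h1 := R.sameCycle_connects hc
      have h2 : R.toMultigraph.ConnectsVia (T.erase t) (R.toMultigraph.dtail a)
          (R.toMultigraph.dtail b) :=
        Multigraph.connectsVia_mono _
          (fun x hx => Finset.mem_erase.2 ⟨by rintro rfl; exact htF hx, hFT hx⟩) h1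
      exact hbridge (by simpa [ha, hb, Multigraph.dtail] using h2)
    have hkey : R.bwSigma (insert t F) = R.bwSigma F * Equiv.swap a b := by
      apply Equiv.ext; intro z
      rw [Equiv.Perm.mul_apply, bwSigma_apply, bwSigma_apply]
      by_cases hz : z.1 = t
      · have hzab : z = a ∨ z = b := by
          rcases z with ⟨e, bb⟩
          cases bb
          · right; rw [hb]; simp_all
          · left; rw [ha]; simp_all
        rcases hzab with rfl | rfl
        · rw [Equiv.swap_apply_left]
          simp [ha, hb, htF, Finset.mem_insert]
        · rw [Equiv.swap_apply_right]
          simp [ha, hb, htF, Finset.mem_insert]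
      · have hza : z ≠ a := fun hc => hz (by rw [hc])
        have hzb : z ≠ b := fun hc => hz (by rw [hc])
        rw [Equiv.swap_apply_of_ne_of_ne hza hzb]
        simp [Finset.mem_insert, hz]
    have mergeOf : ∀ {x y : R.toMultigraph.Dart}, (R.bwSigma F).SameCycle x y →
        (R.bwSigma (insert t F)).SameCycle x y := by
      intro x y hxy
      rw [hkey]
      exact bw_merge_of_sameCycle _ a b hnc hxy
    have claim : ∀ u w : R.toMultigraph.V,
        Relation.ReflTransGen (fun p q => ∃ e ∈ insert t F,
          R.toMultigraph.ends e = (p, q) ∨ R.toMultigraph.ends e = (q, p)) u w →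
        ∀ dd dd' : R.toMultigraph.Dart, R.toMultigraph.dtail dd = u →
          R.toMultigraph.dtail dd' = w → (R.bwSigma (insert t F)).SameCycle dd dd' := by
      intro u w hconn
      induction hconn with
      | refl =>
        intro dd dd' hd hd'
        refine mergeOf (ih hFT dd dd' ?_)
        rw [hd, hd']
        exact Relation.ReflTransGen.refl
      | @tail p q hup hpq ihh =>
        intro dd dd' hd hd'
        obtain ⟨e, he, hends⟩ := hpq
        -- choose darts dp (tail p) and dq (tail q) on edge e
        obtain ⟨dp, dq, hdp, hdq, hdpe, hdqe, hflip⟩ :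
            ∃ dp dq : R.toMultigraph.Dart, R.toMultigraph.dtail dp = p ∧
              R.toMultigraph.dtail dq = q ∧ dp.1 = e ∧ dq.1 = e ∧
              ((dp = (e, true) ∧ dq = (e, false)) ∨ (dp = (e, false) ∧ dq = (e, true))) := by
          rcases hends with h1 | h1
          · exact ⟨(e, true), (e, false), by simp [Multigraph.dtail, h1],
              by simp [Multigraph.dtail, h1], rfl, rfl, Or.inl ⟨rfl, rfl⟩⟩
          · exact ⟨(e, false), (e, true), by simp [Multigraph.dtail, h1],
              by simp [Multigraph.dtail, h1], rfl, rfl, Or.inr ⟨rfl, rfl⟩⟩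
        have s1 : (R.bwSigma (insert t F)).SameCycle dd dp := ihh dd dp hd hdp
        have s3 : (R.bwSigma (insert t F)).SameCycle dq dd' := by
          refine mergeOf (ih hFT dq dd' ?_)
          rw [hdq, hd']
          exact Relation.ReflTransGen.refl
        have s2 : (R.bwSigma (insert t F)).SameCycle dp dq := by
          rcases Finset.mem_insert.1 he with rfl | heF
          · -- e = t : {dp, dq} = {a, b}
            have hmerge : (R.bwSigma (insert e F)).SameCycle a b := by
              rw [hkey]; exact bw_merge_self _ a b hnc
            rcases hflip with ⟨h1, h2⟩ | ⟨h1, h2⟩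
            · rw [h1, h2]; exact hmerge
            · rw [h1, h2]; exact hmerge.symm
          · -- e ∈ F
            refine mergeOf (ih hFT dp dq ?_)
            refine Relation.ReflTransGen.single ⟨e, heF, ?_⟩
            rcases hflip with ⟨h1, h2⟩ | ⟨h1, h2⟩
            · left; rw [h1, h2]
              simp [Multigraph.dtail]
            · right; rw [h1, h2]
              simp [Multigraph.dtail]
        exact (s1.trans s2).trans s3
    exact claim _ _ h d d' rfl rfl

theorem bw_fullCycle (hG : R.toMultigraph.Connected)
    {T : Finset R.toMultigraph.E} (hT : R.toMultigraph.IsSpanningTree T)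
    (d d' : R.toMultigraph.Dart) : (R.bwSigma T).SameCycle d d' :=
  R.connects_sameCycle hG hT T Finset.Subset.rfl d d' (hT.1 _ _)

end RibbonGraph
namespace RibbonGraph

open Finset

variable (R : RibbonGraph)

/-- The degree-zero divisor `head d - tail d` of a dart. -/
def bwW (d : R.toMultigraph.Dart) : R.toMultigraph.V → ℤ := fun u =>
  (if R.toMultigraph.dhead d = u then 1 else 0) - (if R.toMultigraph.dtail d = u then 1 else 0)

lemma bwW_flip (d : R.toMultigraph.Dart) (u : R.toMultigraph.V) :
    bwW R (d.1, !d.2) u = - bwW R d u := by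
  simp only [bwW, dtail_flip, dhead_flip]
  ring

lemma deg_bwW (d : R.toMultigraph.Dart) : R.toMultigraph.deg (bwW R d) = 0 := by
  rw [Multigraph.deg]
  simp [bwW, Finset.sum_sub_distrib, Finset.sum_ite_eq]

lemma sum_bwW (g : R.toMultigraph.V → ℤ) (u : R.toMultigraph.V) :
    ∑ δ : R.toMultigraph.Dart, g (R.toMultigraph.dtail δ) * bwW R δ u
      = - R.toMultigraph.lap g u := by
  rw [Multigraph.lap, Fintype.sum_prod_type, ← Finset.sum_neg_distrib]
  refine Finset.sum_congr rfl fun e _ => ?_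
  rw [Fintype.sum_bool]
  simp only [bwW, Multigraph.dtail, Multigraph.dhead, if_true, if_false, Bool.false_eq_true]
  by_cases hx : (R.toMultigraph.ends e).1 = u <;> by_cases hy : (R.toMultigraph.ends e).2 = u <;>
    simp [hx, hy] <;> ring

lemma sum_filter_bwW (P : R.toMultigraph.V → Prop) [DecidablePred P] (u : R.toMultigraph.V) :
    ∑ δ ∈ Finset.univ.filter (fun δ => P (R.toMultigraph.dtail δ)), bwW R δ u
      = - R.toMultigraph.lap (fun x => if P x then 1 else 0) u := by
  rw [← sum_bwW, Finset.sum_filter]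
  refine Finset.sum_congr rfl fun δ _ => ?_
  by_cases h : P (R.toMultigraph.dtail δ) <;> simp [h]

lemma bw_edge_reach {T : Finset R.toMultigraph.E} {s : R.toMultigraph.Dart}
    (hs : ∀ z, ∃ n : ℕ, ((R.bwSigma T) ^ n) s = z) (e : R.toMultigraph.E) :
    ∃ n : ℕ, (((R.bwSigma T) ^ n) s).1 = e := by
  obtain ⟨n, hn⟩ := hs (e, true)
  exact ⟨n, by rw [hn]⟩

open scoped Classical in
lemma bernardiDiv_formula (T : Finset R.toMultigraph.E) (s : R.toMultigraph.Dart)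
    (hs : ∀ z, ∃ n : ℕ, ((R.bwSigma T) ^ n) s = z) (u : R.toMultigraph.V) :
    R.bernardiDiv T s u = ∑ e : R.toMultigraph.E,
      (if e ∉ T ∧ R.toMultigraph.dtail
          (((R.bwSigma T) ^ (Nat.find (R.bw_edge_reach hs e))) s) = u then (1 : ℤ) else 0) := by
  have htour : ∀ i : ℕ, R.bernardiTour T s i = ((R.bwSigma T) ^ i) s := by
    intro i
    rw [bernardiTour, bernardiStep_eq, Equiv.Perm.iterate_eq_pow]
  rw [bernardiDiv, Finset.card_filter]
  push_cast
  refine Finset.sum_congr rfl fun e _ => ?_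
  refine if_congr (and_congr_right fun he => ?_) rfl rfl
  constructor
  · rintro ⟨i, h1, h2, h3⟩
    rw [htour] at h1 h2
    have hle : Nat.find (R.bw_edge_reach hs e) ≤ i := Nat.find_min' _ h1
    have heq : Nat.find (R.bw_edge_reach hs e) = i := by
      rcases eq_or_lt_of_le hle with h | h
      · exact h
      · exact absurd (by rw [htour]; exact Nat.find_spec (R.bw_edge_reach hs e)) (h3 _ h)
    rw [heq]; exact h2
  · intro h
    refine ⟨Nat.find (R.bw_edge_reach hs e), ?_, ?_, ?_⟩
    · rw [htour]; exact Nat.find_spec (R.bw_edge_reach hs e)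
    · rw [htour]; exact h
    · intro j hj
      rw [htour]
      exact Nat.find_min (R.bw_edge_reach hs e) hj

end RibbonGraph
namespace RibbonGraph

open Finset

variable (R : RibbonGraph)

lemma bw_adj (hG : R.toMultigraph.Connected)
    {T : Finset R.toMultigraph.E} (hT : R.toMultigraph.IsSpanningTree T)
    (d : R.toMultigraph.Dart) :
    ∃ f : R.toMultigraph.V → ℤ,
      R.bernardiDiv T (R.next d) - R.bernardiDiv T d - bwW R d = R.toMultigraph.lap f := by
  classical
  set σ := R.bwSigma T with hσdef
  have hreach : ∀ z, ∃ n : ℕ, (σ ^ n) d = z := by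
    intro z
    obtain ⟨i, _, h⟩ := (R.bw_fullCycle hG hT d z).exists_pow_eq'
    exact ⟨i, h⟩
  have hp := bwPer_pos σ d
  have hsucc : ∀ (k : ℕ) (z : R.toMultigraph.Dart), (σ ^ (k + 1)) z = σ ((σ ^ k) z) := by
    intro k z; rw [pow_succ', Equiv.Perm.mul_apply]
  -- The core identity
  have core : ∀ m : ℕ, m + 1 ≤ bwPer σ d → ∀ u : R.toMultigraph.V,
      R.bernardiDiv T ((σ ^ (m + 1)) d) u - R.bernardiDiv T d u
        = ∑ j ∈ Finset.range (m + 1),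
            (if ((σ ^ j) d).1 ∉ T then bwW R ((σ ^ j) d) u else 0) := by
    intro m hm1 u
    have hreach' : ∀ z, ∃ n : ℕ, (σ ^ n) ((σ ^ (m + 1)) d) = z :=
      bw_reach_shift σ d hreach (m + 1)
    rw [R.bernardiDiv_formula T ((σ ^ (m + 1)) d) hreach' u,
      R.bernardiDiv_formula T d hreach u, ← Finset.sum_sub_distrib,
      ← Finset.sum_fiberwise (Finset.range (m + 1)) (fun j => ((σ ^ j) d).1)
        (fun j => (if ((σ ^ j) d).1 ∉ T then bwW R ((σ ^ j) d) u else 0))]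
    refine Finset.sum_congr rfl fun e _ => ?_
    by_cases he : e ∈ T
    · rw [Finset.sum_eq_zero (fun j hj => by
        simp only [Finset.mem_filter] at hj
        simp [hj.2, he])]
      simp [he]
    · -- non-tree edge
      set δt : R.toMultigraph.Dart := (e, true) with hδt
      set δf : R.toMultigraph.Dart := (e, false) with hδf
      have hLt : ∀ w : R.toMultigraph.Dart, w.1 = e ↔ w = δt ∨ w = δf := by
        rintro ⟨e', bb⟩
        constructor
        · intro hw
          have hw' : e' = e := hw
          subst hw'
          cases bb
          · exact Or.inr rfl
          · exact Or.inl rfl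
        · rintro (h | h) <;> rw [h]
      have hptf_ne : bwPos σ d hreach δt ≠ bwPos σ d hreach δf := by
        intro hc
        have h1 := bwPos_spec σ d hreach δt
        rw [hc, bwPos_spec σ d hreach δf] at h1
        simp [hδt, hδf] at h1
      have hfilter : (Finset.range (m + 1)).filter (fun j => ((σ ^ j) d).1 = e)
          = ({bwPos σ d hreach δt, bwPos σ d hreach δf} : Finset ℕ).filter
              (fun j => j ≤ m) := by
        ext j
        simp only [Finset.mem_filter, Finset.mem_range, Finset.mem_insert,
          Finset.mem_singleton, Nat.lt_succ_iff]
        constructor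
        · rintro ⟨hjm, hedge⟩
          have hjp : j < bwPer σ d := by omega
          refine ⟨?_, hjm⟩
          rcases (hLt _).1 hedge with h | h
          · exact Or.inl (bwPos_unique σ d hreach hjp h).symm
          · exact Or.inr (bwPos_unique σ d hreach hjp h).symm
        · rintro ⟨(rfl | rfl), hle⟩
          · exact ⟨hle, by rw [bwPos_spec]⟩
          · exact ⟨hle, by rw [bwPos_spec]⟩
      have main2 : ∀ z z' : R.toMultigraph.Dart, z' = (z.1, !z.2) →
          (∀ w : R.toMultigraph.Dart, w.1 = e ↔ w = z ∨ w = z') →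
          bwPos σ d hreach z < bwPos σ d hreach z' →
          ((if R.toMultigraph.dtail
              ((σ ^ Nat.find (R.bw_edge_reach hreach' e)) ((σ ^ (m + 1)) d)) = u
              then (1 : ℤ) else 0)
            - (if R.toMultigraph.dtail
              ((σ ^ Nat.find (R.bw_edge_reach hreach e)) d) = u then (1 : ℤ) else 0))
          = ∑ j ∈ ({bwPos σ d hreach z, bwPos σ d hreach z'} : Finset ℕ).filter
              (fun j => j ≤ m), bwW R ((σ ^ j) d) u := by
        intro z z' hzz' hL hlt
        have hfd1 : (σ ^ Nat.find (R.bw_edge_reach hreach e)) d = z :=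
          bw_fo σ d hreach Prod.fst e hL hlt _ _
        have hzlt := bwPos_lt σ d hreach z
        have hz'lt := bwPos_lt σ d hreach z'
        have hne : bwPos σ d hreach z ≠ bwPos σ d hreach z' := hlt.ne
        by_cases c2 : bwPos σ d hreach z' ≤ m
        · have hc1 : bwPos σ d hreach z ≤ m := by omega
          have e1 := bwPos_shift_le σ d hreach hm1 hc1
          have e2 := bwPos_shift_le σ d hreach hm1 c2
          have hlt' : bwPos σ ((σ ^ (m + 1)) d) (bw_reach_shift σ d hreach (m + 1)) z
              < bwPos σ ((σ ^ (m + 1)) d) (bw_reach_shift σ d hreach (m + 1)) z' := by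
            omega
          have hfd'1 : (σ ^ Nat.find (R.bw_edge_reach hreach' e)) ((σ ^ (m + 1)) d) = z :=
            bw_fo σ ((σ ^ (m + 1)) d) (bw_reach_shift σ d hreach (m + 1)) Prod.fst e hL hlt' _ _
          rw [hfd1, hfd'1, sub_self]
          rw [Finset.filter_insert, if_pos hc1, Finset.filter_singleton, if_pos c2,
            Finset.sum_insert (by simpa using hne), Finset.sum_singleton,
            bwPos_spec σ d hreach z, bwPos_spec σ d hreach z', hzz', bwW_flip]
          ring
        · by_cases c1 : bwPos σ d hreach z ≤ m
          · -- straddling edge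
            have e1 := bwPos_shift_le σ d hreach hm1 c1
            have e2 := bwPos_shift_gt σ d hreach hm1
              (show m < bwPos σ d hreach z' by omega)
            have hlt' : bwPos σ ((σ ^ (m + 1)) d) (bw_reach_shift σ d hreach (m + 1)) z'
                < bwPos σ ((σ ^ (m + 1)) d) (bw_reach_shift σ d hreach (m + 1)) z := by
              omega
            have hL' : ∀ w : R.toMultigraph.Dart, w.1 = e ↔ w = z' ∨ w = z :=
              fun w => (hL w).trans or_comm
            have hfd'1 : (σ ^ Nat.find (R.bw_edge_reach hreach' e)) ((σ ^ (m + 1)) d) = z' :=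
              bw_fo σ ((σ ^ (m + 1)) d) (bw_reach_shift σ d hreach (m + 1)) Prod.fst e hL' hlt' _ _
            rw [hfd1, hfd'1]
            rw [Finset.filter_insert, if_pos c1, Finset.filter_singleton, if_neg c2,
              Finset.sum_insert (Finset.notMem_empty _), Finset.sum_empty,
              bwPos_spec σ d hreach z, add_zero]
            rw [hzz', dtail_flip]
            simp [bwW]
          · -- both outside the arc
            have e1 := bwPos_shift_gt σ d hreach hm1 (z := z)
              (show m < bwPos σ d hreach z by omega)
            have e2 := bwPos_shift_gt σ d hreach hm1 (z := z')
              (show m < bwPos σ d hreach z' by omega)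
            have hlt' : bwPos σ ((σ ^ (m + 1)) d) (bw_reach_shift σ d hreach (m + 1)) z
                < bwPos σ ((σ ^ (m + 1)) d) (bw_reach_shift σ d hreach (m + 1)) z' := by
              omega
            have hfd'1 : (σ ^ Nat.find (R.bw_edge_reach hreach' e)) ((σ ^ (m + 1)) d) = z :=
              bw_fo σ ((σ ^ (m + 1)) d) (bw_reach_shift σ d hreach (m + 1)) Prod.fst e hL hlt' _ _
            rw [hfd1, hfd'1, sub_self]
            rw [Finset.filter_insert, if_neg c1, Finset.filter_singleton, if_neg c2,
              Finset.sum_empty]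
      have hsummand : ∑ j ∈ (Finset.range (m + 1)).filter (fun j => ((σ ^ j) d).1 = e),
          (if ((σ ^ j) d).1 ∉ T then bwW R ((σ ^ j) d) u else 0)
          = ∑ j ∈ ({bwPos σ d hreach δt, bwPos σ d hreach δf} : Finset ℕ).filter
              (fun j => j ≤ m), bwW R ((σ ^ j) d) u := by
        rw [show (∑ j ∈ (Finset.range (m + 1)).filter (fun j => ((σ ^ j) d).1 = e),
            (if ((σ ^ j) d).1 ∉ T then bwW R ((σ ^ j) d) u else 0))
            = ∑ j ∈ (Finset.range (m + 1)).filter (fun j => ((σ ^ j) d).1 = e),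
              bwW R ((σ ^ j) d) u from Finset.sum_congr rfl fun j hj => by
                simp only [Finset.mem_filter] at hj
                simp [hj.2, he]]
        rw [hfilter]
      rw [hsummand]
      simp only [he, not_false_eq_true, true_and]
      rcases lt_trichotomy (bwPos σ d hreach δt) (bwPos σ d hreach δf) with hlt | heq | hgt
      · exact main2 δt δf rfl hLt hlt
      · exact absurd heq hptf_ne
      · have hL' : ∀ w : R.toMultigraph.Dart, w.1 = e ↔ w = δf ∨ w = δt :=
          fun w => (hLt w).trans or_comm
        have hmm := main2 δf δt rfl hL' hgt
        rw [Finset.pair_comm (bwPos σ d hreach δt) (bwPos σ d hreach δf)]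
        exact hmm
  -- Now split on whether the starting dart is a tree dart
  by_cases hdT : d.1 ∈ T
  case neg =>
    refine ⟨0, ?_⟩
    rw [R.toMultigraph.lap_zero]
    funext u
    have hm2 : (σ ^ (0 + 1)) d = R.next d := by
      rw [zero_add, pow_one, hσdef, bwSigma_apply, if_neg hdT]
    have hc := core 0 (by omega) u
    rw [hm2, Finset.sum_range_one] at hc
    simp only [pow_zero, Equiv.Perm.coe_one, id_eq] at hc
    rw [if_pos hdT] at hc
    simp only [Pi.sub_apply, Pi.zero_apply]
    linarith
  case pos =>
    set m := bwPos σ d hreach (d.1, !d.2) with hmdef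
    have hmlt := bwPos_lt σ d hreach (d.1, !d.2)
    have hm1 : m + 1 ≤ bwPer σ d := by omega
    have hflip : (σ ^ m) d = (d.1, !d.2) := bwPos_spec σ d hreach _
    have hm2 : (σ ^ (m + 1)) d = R.next d := by
      rw [hsucc, hflip, hσdef, bwSigma_apply]
      simp [hdT]
    -- the subtree component predicate
    set P : R.toMultigraph.V → Prop :=
      fun x => R.toMultigraph.ConnectsVia (T.erase d.1) (R.toMultigraph.dhead d) x with hPdef
    have hPhead : P (R.toMultigraph.dhead d) := Relation.ReflTransGen.refl
    have hPtrans : ∀ {x y}, P x →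
        R.toMultigraph.ConnectsVia (T.erase d.1) x y → P y :=
      fun hx hxy => Relation.ReflTransGen.trans hx hxy
    have hbridge := R.toMultigraph.bridge hG hT hdT
    have hPtail : ¬ P (R.toMultigraph.dtail d) := by
      intro hc0
      have hc : R.toMultigraph.ConnectsVia (T.erase d.1) (R.toMultigraph.dhead d)
          (R.toMultigraph.dtail d) := hc0
      have hsym := R.toMultigraph.connectsVia_symm hc
      cases hdb : d.2
      · have h1 : R.toMultigraph.dtail d = (R.toMultigraph.ends d.1).2 := by
          simp [Multigraph.dtail, hdb]
        have h2 : R.toMultigraph.dhead d = (R.toMultigraph.ends d.1).1 := by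
          simp [Multigraph.dhead, hdb]
        rw [h1, h2] at hc
        exact hbridge hc
      · have h1 : R.toMultigraph.dtail d = (R.toMultigraph.ends d.1).1 := by
          simp [Multigraph.dtail, hdb]
        have h2 : R.toMultigraph.dhead d = (R.toMultigraph.ends d.1).2 := by
          simp [Multigraph.dhead, hdb]
        rw [h1, h2] at hsym
        exact hbridge hsym
    have hsameedge : ∀ w : R.toMultigraph.Dart, w.1 = d.1 → w = d ∨ w = (d.1, !d.2) := by
      intro w hw
      by_cases hb : w.2 = d.2
      · exact Or.inl (Prod.ext_iff.2 ⟨hw, hb⟩)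
      · refine Or.inr (Prod.ext_iff.2 ⟨hw, ?_⟩)
        revert hb; cases hww : w.2 <;> cases hdd : d.2 <;> simp
    have S1 : ∀ j : ℕ, 1 ≤ j → j ≤ m → P (R.toMultigraph.dtail ((σ ^ j) d)) := by
      intro j
      induction j with
      | zero => omega
      | succ j ihj =>
        intro _ hjm
        rcases Nat.eq_zero_or_pos j with rfl | hj1
        · rw [zero_add, pow_one]
          have hh : R.toMultigraph.dtail (σ d) = R.toMultigraph.dhead d := by
            rw [hσdef, dtail_bwSigma, if_pos hdT]
          rw [hh]; exact hPhead
        · have hPj := ihj (by omega) (by omega)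
          rw [hsucc]
          by_cases hin : ((σ ^ j) d).1 ∈ T
          · have hne1 : ((σ ^ j) d).1 ≠ d.1 := by
              intro hcc
              rcases hsameedge _ hcc with h | h
              · have h0 := bwPos_unique σ d hreach
                  (show j < bwPer σ d by omega) h
                rw [bwPos_self σ d hreach] at h0
                omega
              · have h0 := bwPos_unique σ d hreach
                  (show j < bwPer σ d by omega) h
                omega
            have hstep := R.dart_step (F := T.erase d.1)
              (Finset.mem_erase.2 ⟨hne1, hin⟩)
            have hh : R.toMultigraph.dtail (σ ((σ ^ j) d))
                = R.toMultigraph.dhead ((σ ^ j) d) := by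
              rw [hσdef, dtail_bwSigma, if_pos hin]
            rw [hh]
            exact hPtrans hPj hstep
          · have hh : R.toMultigraph.dtail (σ ((σ ^ j) d))
                = R.toMultigraph.dtail ((σ ^ j) d) := by
              rw [hσdef, dtail_bwSigma, if_neg hin]
            rw [hh]; exact hPj
    have S2 : ∀ j : ℕ, m + 1 ≤ j → j < bwPer σ d →
        ¬ P (R.toMultigraph.dtail ((σ ^ j) d)) := by
      intro j
      induction j with
      | zero => omega
      | succ j ihj =>
        intro hj1 hjp
        by_cases hjm : j = m
        · subst hjm
          rw [hm2, dtail_next]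
          exact hPtail
        · have hj2 : m + 1 ≤ j := by omega
          have ihP := ihj hj2 (by omega)
          rw [hsucc]
          by_cases hin : ((σ ^ j) d).1 ∈ T
          · have hne1 : ((σ ^ j) d).1 ≠ d.1 := by
              intro hcc
              rcases hsameedge _ hcc with h | h
              · have h0 := bwPos_unique σ d hreach
                  (show j < bwPer σ d by omega) h
                rw [bwPos_self σ d hreach] at h0
                omega
              · have h0 := bwPos_unique σ d hreach
                  (show j < bwPer σ d by omega) h
                omega
            have hstep := R.dart_step (F := T.erase d.1)
              (Finset.mem_erase.2 ⟨hne1, hin⟩)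
            have hh : R.toMultigraph.dtail (σ ((σ ^ j) d))
                = R.toMultigraph.dhead ((σ ^ j) d) := by
              rw [hσdef, dtail_bwSigma, if_pos hin]
            rw [hh]
            intro hcc
            exact ihP (hPtrans hcc (R.toMultigraph.connectsVia_symm hstep))
          · have hh : R.toMultigraph.dtail (σ ((σ ^ j) d))
                = R.toMultigraph.dtail ((σ ^ j) d) := by
              rw [hσdef, dtail_bwSigma, if_neg hin]
            rw [hh]; exact ihP
    have hinj : ∀ x ∈ Finset.Icc 1 m, ∀ y ∈ Finset.Icc 1 m,
        (σ ^ x) d = (σ ^ y) d → x = y := by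
      intro x hx y hy hxy
      simp only [Finset.mem_Icc] at hx hy
      have h1 := bwPos_unique σ d hreach (show x < bwPer σ d by omega)
        (rfl : (σ ^ x) d = (σ ^ x) d)
      have h2 := bwPos_unique σ d hreach (show y < bwPer σ d by omega) hxy.symm
      omega
    have himg : (Finset.Icc 1 m).image (fun j => (σ ^ j) d)
        = Finset.univ.filter (fun δ => P (R.toMultigraph.dtail δ)) := by
      ext δ
      simp only [Finset.mem_image, Finset.mem_filter, Finset.mem_univ, true_and,
        Finset.mem_Icc]
      constructor
      · rintro ⟨j, ⟨hj1, hj2⟩, rfl⟩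
        exact S1 j hj1 hj2
      · intro hδ
        refine ⟨bwPos σ d hreach δ, ⟨?_, ?_⟩, bwPos_spec σ d hreach δ⟩
        · rcases Nat.eq_zero_or_pos (bwPos σ d hreach δ) with h0 | h
          · exfalso
            have hspec := bwPos_spec σ d hreach δ
            rw [h0, pow_zero] at hspec
            simp only [Equiv.Perm.coe_one, id_eq] at hspec
            rw [← hspec] at hδ
            exact hPtail hδ
          · exact h
        · by_contra hgt
          push_neg at hgt
          refine S2 (bwPos σ d hreach δ) (by omega) (bwPos_lt σ d hreach δ) ?_
          rw [bwPos_spec σ d hreach δ]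
          exact hδ
    refine ⟨-(fun x => if P x then (1 : ℤ) else 0), ?_⟩
    rw [R.toMultigraph.lap_neg]
    funext u
    simp only [Pi.sub_apply, Pi.neg_apply]
    have hc := core m hm1 u
    rw [hm2] at hc
    have tel : ∀ k : ℕ,
        (∑ j ∈ Finset.range k, (if ((σ ^ j) d).1 ∈ T then bwW R ((σ ^ j) d) u else 0))
        = (if R.toMultigraph.dtail ((σ ^ k) d) = u then (1 : ℤ) else 0)
          - (if R.toMultigraph.dtail d = u then (1 : ℤ) else 0) := by
      intro k
      induction k with
      | zero => simp
      | succ k ihk =>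
        rw [Finset.sum_range_succ, ihk, hsucc]
        by_cases hin : ((σ ^ k) d).1 ∈ T
        · rw [if_pos hin]
          have hh : R.toMultigraph.dtail (σ ((σ ^ k) d))
              = R.toMultigraph.dhead ((σ ^ k) d) := by
            rw [hσdef, dtail_bwSigma, if_pos hin]
          rw [hh]
          simp only [bwW]
          ring
        · rw [if_neg hin]
          have hh : R.toMultigraph.dtail (σ ((σ ^ k) d))
              = R.toMultigraph.dtail ((σ ^ k) d) := by
            rw [hσdef, dtail_bwSigma, if_neg hin]
          rw [hh]
          ring
    have htel := tel (m + 1)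
    rw [hm2, dtail_next] at htel
    have hrange : Finset.range (m + 1) = insert 0 (Finset.Icc 1 m) := by
      ext j
      simp only [Finset.mem_range, Finset.mem_insert, Finset.mem_Icc]
      omega
    have h1 := Finset.sum_image (f := fun δ => bwW R δ u) hinj
    rw [himg] at h1
    have hIcc : ∑ j ∈ Finset.Icc 1 m, bwW R ((σ ^ j) d) u
        = - R.toMultigraph.lap (fun x => if P x then (1 : ℤ) else 0) u :=
      h1.symm.trans (R.sum_filter_bwW P u)
    have hsum : ∑ j ∈ Finset.range (m + 1), bwW R ((σ ^ j) d) u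
        = bwW R d u + ∑ j ∈ Finset.Icc 1 m, bwW R ((σ ^ j) d) u := by
      rw [hrange, Finset.sum_insert (by simp)]
      simp
    have htotal : ∑ j ∈ Finset.range (m + 1), bwW R ((σ ^ j) d) u
        = (∑ j ∈ Finset.range (m + 1),
            (if ((σ ^ j) d).1 ∈ T then bwW R ((σ ^ j) d) u else 0))
          + (∑ j ∈ Finset.range (m + 1),
            (if ((σ ^ j) d).1 ∉ T then bwW R ((σ ^ j) d) u else 0)) := by
      rw [← Finset.sum_add_distrib]
      refine Finset.sum_congr rfl fun j _ => ?_
      by_cases hin : ((σ ^ j) d).1 ∈ T <;> simp [hin]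
    linarith [hc, htotal, htel, hsum, hIcc]

end RibbonGraph

namespace RibbonGraph

/-- for two edges `e₁, e₂` incident to the same vertex `v`
(encoded as darts `d₁, d₂` with tail `v`), there is a degree-zero divisor
class `γ₀` with `[β_{(v,e₂)}(T)] = γ₀ + [β_{(v,e₁)}(T)]` for every spanning
tree `T`; in particular `β_{(v,e₁)}(T) - β_{(v,e₂)}(T)` is independent of `T`
up to linear equivalence. -/
theorem bernardi_independent_of_edge_up_to_translation (R : RibbonGraph)
    (hG : R.toMultigraph.Connected) (hl : R.toMultigraph.Loopless)
    (v : R.toMultigraph.V) (d₁ d₂ : R.toMultigraph.Dart)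
    (h₁ : R.toMultigraph.dtail d₁ = v) (h₂ : R.toMultigraph.dtail d₂ = v) :
    ∃ γ₀ : R.toMultigraph.V → ℤ, R.toMultigraph.deg γ₀ = 0 ∧
      ∀ T : Finset R.toMultigraph.E, R.toMultigraph.IsSpanningTree T →
        R.toMultigraph.LinEquiv (R.bernardiDiv T d₂) (γ₀ + R.bernardiDiv T d₁) := by
  classical
  have hsame : R.next.SameCycle d₁ d₂ := (R.cyclic d₁ d₂).1 (by rw [h₁, h₂])
  obtain ⟨k, _, hk⟩ := hsame.exists_pow_eq'
  refine ⟨fun u => ∑ j ∈ Finset.range k, bwW R ((R.next ^ j) d₁) u, ?_, ?_⟩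
  · -- degree zero
    rw [Multigraph.deg, Finset.sum_comm]
    refine Finset.sum_eq_zero fun j _ => ?_
    simpa [Multigraph.deg] using R.deg_bwW ((R.next ^ j) d₁)
  · intro T hT
    have key : ∀ (n : ℕ) (d : R.toMultigraph.Dart), ∃ f : R.toMultigraph.V → ℤ,
        R.bernardiDiv T ((R.next ^ n) d) -
          ((fun u => ∑ j ∈ Finset.range n, bwW R ((R.next ^ j) d) u) + R.bernardiDiv T d)
          = R.toMultigraph.lap f := by
      intro n
      induction n with
      | zero =>
        intro d
        refine ⟨0, ?_⟩
        rw [R.toMultigraph.lap_zero]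
        funext u
        simp
      | succ n ihn =>
        intro d
        obtain ⟨f1, hf1⟩ := ihn d
        obtain ⟨f2, hf2⟩ := R.bw_adj hG hT ((R.next ^ n) d)
        refine ⟨f1 + f2, ?_⟩
        rw [R.toMultigraph.lap_add]
        funext u
        have e1 := congrFun hf1 u
        have e2 := congrFun hf2 u
        have hpow : (R.next ^ (n + 1)) d = R.next ((R.next ^ n) d) := by
          rw [pow_succ', Equiv.Perm.mul_apply]
        simp only [Pi.add_apply, Pi.sub_apply] at e1 e2 ⊢
        rw [hpow, Finset.sum_range_succ]
        linarith
    obtain ⟨f, hf⟩ := key k d₁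
    rw [hk] at hf
    exact ⟨f, hf⟩

end RibbonGraph
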